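/- Define W₂ : ℝ × ℝ → ℝ by W₂(x, y) = ∑_{n≥1} ( D(n, x)·10^{−(2n−1)} + D(n, y)·10^{−2n} ), i.e., the real number obtained by interweaving the decimal digits of x and y. Then W₂ is injective on (0,1) × (0,1): for x₁, y₁, x₂, y₂ ∈ (0,1), if W₂(x₁, y₁) = W₂(x₂, y₂) then x₁ = x₂ and y₁ = y₂. -/

import Mathlib

/-- `D n x` is the `n`-th decimal digit of `x` (for `n ≥ 1`):
`D(n, x) = ⌊10 · fract(10^(n−1) · x)⌋`. -/
noncomputable def D (n : ℕ) (x : ℝ) : ℤ :=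
  ⌊10 * Int.fract ((10 : ℝ) ^ (n - 1) * x)⌋

lemma D_nonneg (n : ℕ) (x : ℝ) : 0 ≤ D n x :=
  Int.floor_nonneg.mpr (by
    have := Int.fract_nonneg ((10 : ℝ) ^ (n - 1) * x); linarith)

lemma D_le (n : ℕ) (x : ℝ) : D n x ≤ 9 := by
  have h := Int.fract_lt_one ((10 : ℝ) ^ (n - 1) * x)
  have h2 : (10:ℝ) * Int.fract ((10 : ℝ) ^ (n - 1) * x) < ((10:ℤ):ℝ) := by push_cast; linarith
  have : D n x < 10 := by simpa [D] using Int.floor_lt.mpr h2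
  omega

lemma D_floor (n : ℕ) (x : ℝ) :
    D (n+1) x = ⌊(10:ℝ) ^ (n+1) * x⌋ - 10 * ⌊(10:ℝ) ^ n * x⌋ := by
  have : (10:ℝ) * Int.fract ((10 : ℝ) ^ n * x)
      = (10:ℝ) ^ (n+1) * x - ((10 * ⌊(10:ℝ) ^ n * x⌋ : ℤ) : ℝ) := by
    rw [Int.fract]; push_cast; ring
  rw [D, Nat.add_sub_cancel, this, Int.floor_sub_intCast]

lemma nine_div (n : ℕ) : (9:ℝ)/10^(n+1) = (9/10)*(1/10)^n := by
  rw [pow_succ, one_div, inv_pow]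
  field_simp

lemma summable_nine : Summable (fun n => (9:ℝ) / 10 ^ (n+1)) := by
  simp only [nine_div]
  exact (summable_geometric_of_lt_one (by norm_num) (by norm_num)).mul_left _

lemma summable_digits (f : ℕ → ℤ) (hf : ∀ n, 0 ≤ f n ∧ f n ≤ 9) :
    Summable (fun n => (f n : ℝ) / 10 ^ (n+1)) := by
  refine Summable.of_nonneg_of_le (fun n => ?_) (fun n => ?_) summable_nine
  · have : (0:ℝ) ≤ (f n : ℝ) := by exact_mod_cast (hf n).1
    positivity
  · have h1 : (f n : ℝ) ≤ 9 := by exact_mod_cast (hf n).2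
    exact div_le_div_of_nonneg_right h1 (by positivity)

lemma tsum_nine : ∑' n : ℕ, (9:ℝ) / 10 ^ (n+1) = 1 := by
  simp only [nine_div]
  rw [tsum_mul_left, tsum_geometric_of_lt_one (by norm_num) (by norm_num)]
  norm_num

lemma tail_lt (f : ℕ → ℤ) (hf : ∀ n, 0 ≤ f n ∧ f n ≤ 9) (k m : ℕ) (hm : k ≤ m)
    (hm9 : f m ≠ 9) :
    ∑' n : ℕ, (f (n+k) : ℝ) / 10 ^ (n+k+1) < ((10:ℝ)^k)⁻¹ := by
  have hsum : Summable (fun n => (9:ℝ) / 10 ^ (n+k+1)) := by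
    have := summable_nine.mul_left ((10:ℝ)^k)⁻¹
    apply this.congr
    intro n
    rw [pow_add, pow_add]
    field_simp
    ring
  have hlt : ∑' n : ℕ, (f (n+k) : ℝ) / 10 ^ (n+k+1) < ∑' n : ℕ, (9:ℝ) / 10 ^ (n+k+1) := by
    apply Summable.tsum_lt_tsum_of_nonneg (i := m - k) (fun n => by
        have : (0:ℝ) ≤ (f (n+k):ℝ) := by exact_mod_cast (hf (n+k)).1
        positivity) _ _ hsum
    · intro n
      have h1 : (f (n+k) : ℝ) ≤ 9 := by exact_mod_cast (hf (n+k)).2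
      exact div_le_div_of_nonneg_right h1 (by positivity)
    · have heq : m - k + k = m := by omega
      have h8 : f (m - k + k) ≤ 8 := by
        rw [heq]
        have := (hf m).2
        omega
      have h1 : (f (m-k+k) : ℝ) < 9 := by
        have : (f (m-k+k) : ℝ) ≤ 8 := by exact_mod_cast h8
        linarith
      exact (div_lt_div_iff_of_pos_right (by positivity)).mpr h1
  calc _ < ∑' n : ℕ, (9:ℝ) / 10 ^ (n+k+1) := hlt
  _ = ((10:ℝ)^k)⁻¹ := by
      have : ∀ n : ℕ, (9:ℝ) / 10 ^ (n+k+1) = ((10:ℝ)^k)⁻¹ * ((9:ℝ)/10^(n+1)) := by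
        intro n
        rw [pow_add, pow_add]
        field_simp
        ring
      rw [tsum_congr this, tsum_mul_left, tsum_nine, mul_one]

lemma partial_sum_eq (x : ℝ) (hx : x ∈ Set.Ico (0:ℝ) 1) (N : ℕ) :
    ∑ n ∈ Finset.range N, (D (n+1) x : ℝ) / 10 ^ (n+1)
      = (⌊(10:ℝ)^N * x⌋ : ℝ) / 10 ^ N := by
  induction N with
  | zero =>
    simp
    rw [show ⌊x⌋ = 0 from Int.floor_eq_zero_iff.mpr (by simpa using hx)]
    simp
  | succ N ih =>
    rw [Finset.sum_range_succ, ih, D_floor]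
    push_cast
    field_simp
    ring

lemma hasSum_digits (x : ℝ) (hx : x ∈ Set.Ico (0:ℝ) 1) :
    HasSum (fun n => (D (n+1) x : ℝ) / 10 ^ (n+1)) x := by
  have hsum : Summable (fun n => (D (n+1) x : ℝ) / 10 ^ (n+1)) :=
    summable_digits _ (fun n => ⟨D_nonneg _ _, D_le _ _⟩)
  have h1 := hsum.hasSum
  have h2 := h1.tendsto_sum_nat
  -- partial sums tend to x
  have h3 : Filter.Tendsto (fun N => ∑ n ∈ Finset.range N, (D (n+1) x : ℝ) / 10 ^ (n+1))
      Filter.atTop (nhds x) := by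
    have heq : ∀ N, ∑ n ∈ Finset.range N, (D (n+1) x : ℝ) / 10 ^ (n+1)
        = x - Int.fract ((10:ℝ)^N * x) / 10 ^ N := by
      intro N
      rw [partial_sum_eq x hx N]
      have h5 := Int.floor_add_fract ((10:ℝ)^N * x)
      have h6 : (0:ℝ) < 10 ^ N := by positivity
      field_simp
      linarith
    have htend : Filter.Tendsto (fun N : ℕ => Int.fract ((10:ℝ)^N * x) / 10 ^ N)
        Filter.atTop (nhds 0) := by
      apply squeeze_zero (fun N => by
          have := Int.fract_nonneg ((10:ℝ)^N * x)
          positivity) (fun N => ?_)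
        (tendsto_pow_atTop_nhds_zero_of_lt_one (by norm_num : (0:ℝ) ≤ 1/10) (by norm_num))
      have h4 : Int.fract ((10:ℝ)^N * x) ≤ 1 := (Int.fract_lt_one _).le
      calc Int.fract ((10:ℝ)^N * x) / 10 ^ N ≤ 1 / 10 ^ N :=
            div_le_div_of_nonneg_right h4 (by positivity)
      _ = (1/10:ℝ)^N := by rw [div_pow, one_pow]
    simpa using ((tendsto_const_nhds (x := x)).sub htend).congr (fun N => (heq N).symm)
  have := tendsto_nhds_unique h2 h3
  rwa [this] at h1

lemma not_eventually_nine (x : ℝ) (hx : x ∈ Set.Ico (0:ℝ) 1) (N : ℕ) :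
    ∃ m, N ≤ m ∧ D (m+1) x ≠ 9 := by
  by_contra hcon
  push_neg at hcon
  have h9 : ∀ m, N ≤ m → D (m+1) x = 9 := fun m hm => hcon m hm
  have hsum : Summable (fun n => (D (n+1) x : ℝ) / 10 ^ (n+1)) :=
    summable_digits _ (fun n => ⟨D_nonneg _ _, D_le _ _⟩)
  have hx_eq : x = ∑' n, (D (n+1) x : ℝ) / 10 ^ (n+1) := (hasSum_digits x hx).tsum_eq.symm
  have hsplit := Summable.sum_add_tsum_nat_add (f := fun n => (D (n+1) x : ℝ) / 10 ^ (n+1)) N hsum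
  have htail : ∑' n : ℕ, (D (n+N+1) x : ℝ) / 10 ^ (n+N+1) = ((10:ℝ)^N)⁻¹ := by
    have heq : ∀ n : ℕ, (D (n+N+1) x : ℝ) / 10 ^ (n+N+1)
        = ((10:ℝ)^N)⁻¹ * ((9:ℝ)/10^(n+1)) := by
      intro n
      rw [h9 (n+N) (by omega)]
      rw [pow_add, pow_add]
      push_cast
      field_simp
      ring
    rw [tsum_congr heq, tsum_mul_left, tsum_nine, mul_one]
  -- x = P + 10^{-N}
  set P := ∑ n ∈ Finset.range N, (D (n+1) x : ℝ) / 10 ^ (n+1) with hP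
  have hxPN : x = P + ((10:ℝ)^N)⁻¹ := by
    conv_lhs => rw [hx_eq]
    rw [← hsplit, htail]
  -- 10^N * x is an integer
  set z : ℤ := ∑ n ∈ Finset.range N, D (n+1) x * 10 ^ (N-n-1) with hz
  have hPz : (10:ℝ)^N * P = (z : ℝ) := by
    rw [hP, hz, Finset.mul_sum]
    push_cast
    apply Finset.sum_congr rfl
    intro n hn
    have hn' : n < N := Finset.mem_range.mp hn
    have hpow : (10:ℝ) ^ (N - n - 1) * 10 ^ (n+1) = 10 ^ N := by
      rw [← pow_add]
      congr 1
      omega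
    rw [← hpow]
    field_simp
  have hint : (10:ℝ)^N * x = ((z + 1 : ℤ) : ℝ) := by
    rw [hxPN, mul_add, hPz, mul_inv_cancel₀ (by positivity : ((10:ℝ)^N) ≠ 0)]
    norm_cast
  have hD0 : D (N+1) x = 0 := by
    rw [D, Nat.add_sub_cancel, hint, Int.fract_intCast]
    norm_num
  have := h9 N le_rfl
  omega

lemma sum_lt (f g : ℕ → ℤ) (hf : ∀ n, 0 ≤ f n ∧ f n ≤ 9) (hg : ∀ n, 0 ≤ g n ∧ g n ≤ 9)
    (hf9 : ∀ N, ∃ m, N ≤ m ∧ f m ≠ 9) (k : ℕ)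
    (hmin : ∀ j, j < k → f j = g j) (hk : f k < g k) :
    ∑' n : ℕ, (f n : ℝ) / 10 ^ (n+1) < ∑' n : ℕ, (g n : ℝ) / 10 ^ (n+1) := by
  have hsf := summable_digits f hf
  have hsg := summable_digits g hg
  have hsplitf := Summable.sum_add_tsum_nat_add (f := fun n => (f n : ℝ) / 10 ^ (n+1)) (k+1) hsf
  have hsplitg := Summable.sum_add_tsum_nat_add (f := fun n => (g n : ℝ) / 10 ^ (n+1)) (k+1) hsg
  obtain ⟨m, hm1, hm2⟩ := hf9 (k+1)
  have htf : ∑' n : ℕ, (f (n+(k+1)) : ℝ) / 10 ^ (n+(k+1)+1) < ((10:ℝ)^(k+1))⁻¹ :=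
    tail_lt f hf (k+1) m hm1 hm2
  have htg : (0:ℝ) ≤ ∑' n : ℕ, (g (n+(k+1)) : ℝ) / 10 ^ (n+(k+1)+1) := by
    apply tsum_nonneg
    intro n
    have : (0:ℝ) ≤ (g (n+(k+1)):ℝ) := by exact_mod_cast (hg (n+(k+1))).1
    positivity
  have hhead : ∑ n ∈ Finset.range k, (f n : ℝ) / 10 ^ (n+1)
      = ∑ n ∈ Finset.range k, (g n : ℝ) / 10 ^ (n+1) := by
    apply Finset.sum_congr rfl
    intro n hn
    rw [hmin n (Finset.mem_range.mp hn)]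
  have hfg1 : ((f k : ℝ) + 1) ≤ (g k : ℝ) := by exact_mod_cast hk
  have hcomb : (f k:ℝ)/10^(k+1) + ((10:ℝ)^(k+1))⁻¹ = ((f k:ℝ)+1)/10^(k+1) := by
    rw [inv_eq_one_div]; ring
  have hle : ((f k:ℝ)+1)/10^(k+1) ≤ (g k:ℝ)/10^(k+1) :=
    div_le_div_of_nonneg_right hfg1 (by positivity)
  rw [← hsplitf, ← hsplitg, Finset.sum_range_succ, Finset.sum_range_succ, hhead]
  beta_reduce
  linarith

lemma digits_eq (f g : ℕ → ℤ) (hf : ∀ n, 0 ≤ f n ∧ f n ≤ 9) (hg : ∀ n, 0 ≤ g n ∧ g n ≤ 9)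
    (hf9 : ∀ N, ∃ m, N ≤ m ∧ f m ≠ 9) (hg9 : ∀ N, ∃ m, N ≤ m ∧ g m ≠ 9)
    (h : ∑' n : ℕ, (f n : ℝ) / 10 ^ (n+1) = ∑' n : ℕ, (g n : ℝ) / 10 ^ (n+1)) :
    f = g := by
  by_contra hne
  have hex : ∃ k, f k ≠ g k := Function.ne_iff.mp hne
  set k := Nat.find hex with hkdef
  have hspec : f k ≠ g k := Nat.find_spec hex
  have hmin : ∀ j, j < k → f j = g j := by
    intro j hj
    by_contra hj'
    exact Nat.find_min hex hj hj'
  rcases lt_or_gt_of_ne hspec with h1 | h1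
  · exact absurd h (ne_of_lt (sum_lt f g hf hg hf9 k hmin h1))
  · exact absurd h.symm (ne_of_lt (sum_lt g f hg hf hg9 k (fun j hj => (hmin j hj).symm) h1))

noncomputable def interleave (x y : ℝ) : ℕ → ℤ :=
  fun m => if m % 2 = 0 then D (m/2 + 1) x else D (m/2 + 1) y

lemma interleave_bounds (x y : ℝ) (m : ℕ) :
    0 ≤ interleave x y m ∧ interleave x y m ≤ 9 := by
  unfold interleave
  split <;> exact ⟨D_nonneg _ _, D_le _ _⟩

lemma interleave_even (x y : ℝ) (n : ℕ) : interleave x y (2*n) = D (n+1) x := by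
  unfold interleave
  rw [if_pos (by omega)]
  congr 1
  omega

lemma interleave_odd (x y : ℝ) (n : ℕ) : interleave x y (2*n+1) = D (n+1) y := by
  unfold interleave
  rw [if_neg (by omega)]
  congr 1
  omega

/-- `W₂ (x, y) = ∑_{n≥1} (D(n,x)·10^{-(2n-1)} + D(n,y)·10^{-2n})`: the real number
obtained by interweaving the decimal digits of `x` and `y`. -/
noncomputable def W₂ (x y : ℝ) : ℝ :=
  ∑' n : ℕ,
    ((D (n + 1) x : ℝ) * (10 : ℝ) ^ (-(2 * ((n : ℤ) + 1) - 1)) +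
      (D (n + 1) y : ℝ) * (10 : ℝ) ^ (-(2 * ((n : ℤ) + 1))))

lemma W₂_eq (x y : ℝ) :
    W₂ x y = ∑' m : ℕ, (interleave x y m : ℝ) / 10 ^ (m+1) := by
  set h : ℕ → ℝ := fun m => (interleave x y m : ℝ) / 10 ^ (m+1) with hh
  have hs : Summable h := summable_digits _ (interleave_bounds x y)
  have he : Summable (fun n => h (2*n)) :=
    hs.comp_injective (fun a b hab => by omega)
  have ho : Summable (fun n => h (2*n+1)) :=
    hs.comp_injective (fun a b hab => by omega)
  have hsum : HasSum h ((∑' n, h (2*n)) + (∑' n, h (2*n+1))) :=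
    HasSum.even_add_odd he.hasSum ho.hasSum
  have hterm : ∀ n : ℕ,
      (D (n + 1) x : ℝ) * (10 : ℝ) ^ (-(2 * ((n : ℤ) + 1) - 1)) +
        (D (n + 1) y : ℝ) * (10 : ℝ) ^ (-(2 * ((n : ℤ) + 1)))
      = h (2*n) + h (2*n+1) := by
    intro n
    have e1 : (10:ℝ) ^ (-(2 * ((n:ℤ) + 1) - 1)) = ((10:ℝ)^(2*n+1+1-1))⁻¹ := by
      rw [show -(2 * ((n:ℤ) + 1) - 1) = -((2*n+1 : ℕ) : ℤ) by push_cast; ring,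
        zpow_neg, zpow_natCast]
      norm_num
    have e2 : (10:ℝ) ^ (-(2 * ((n:ℤ) + 1))) = ((10:ℝ)^(2*n+1+1))⁻¹ := by
      rw [show -(2 * ((n:ℤ) + 1)) = -((2*n+2 : ℕ) : ℤ) by push_cast; ring,
        zpow_neg, zpow_natCast]
    rw [hh]
    simp only [interleave_even, interleave_odd]
    rw [e1, e2]
    have : (2*n+1+1-1) = 2*n+1 := by omega
    rw [this]
    field_simp
  rw [W₂, tsum_congr hterm, Summable.tsum_add he ho, hsum.tsum_eq]

lemma interleave_not_nine (x y : ℝ) (hx : x ∈ Set.Ico (0:ℝ) 1) (N : ℕ) :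
    ∃ m, N ≤ m ∧ interleave x y m ≠ 9 := by
  obtain ⟨m, hm1, hm2⟩ := not_eventually_nine x hx N
  exact ⟨2*m, by omega, by rwa [interleave_even]⟩

/-- `W₂` is injective on `(0,1) × (0,1)`. -/
theorem W₂_injOn (x₁ y₁ x₂ y₂ : ℝ)
    (hx₁ : x₁ ∈ Set.Ioo (0 : ℝ) 1) (hy₁ : y₁ ∈ Set.Ioo (0 : ℝ) 1)
    (hx₂ : x₂ ∈ Set.Ioo (0 : ℝ) 1) (hy₂ : y₂ ∈ Set.Ioo (0 : ℝ) 1)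
    (h : W₂ x₁ y₁ = W₂ x₂ y₂) : x₁ = x₂ ∧ y₁ = y₂ := by
  have ico : ∀ z : ℝ, z ∈ Set.Ioo (0:ℝ) 1 → z ∈ Set.Ico (0:ℝ) 1 :=
    fun z hz => ⟨hz.1.le, hz.2⟩
  rw [W₂_eq, W₂_eq] at h
  have hceq : interleave x₁ y₁ = interleave x₂ y₂ :=
    digits_eq _ _ (interleave_bounds x₁ y₁) (interleave_bounds x₂ y₂)
      (interleave_not_nine x₁ y₁ (ico _ hx₁)) (interleave_not_nine x₂ y₂ (ico _ hx₂)) h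
  have hDx : ∀ n : ℕ, D (n+1) x₁ = D (n+1) x₂ := by
    intro n
    have := congr_fun hceq (2*n)
    rwa [interleave_even, interleave_even] at this
  have hDy : ∀ n : ℕ, D (n+1) y₁ = D (n+1) y₂ := by
    intro n
    have := congr_fun hceq (2*n+1)
    rwa [interleave_odd, interleave_odd] at this
  constructor
  · rw [(hasSum_digits x₁ (ico _ hx₁)).tsum_eq.symm, (hasSum_digits x₂ (ico _ hx₂)).tsum_eq.symm]
    exact tsum_congr (fun n => by rw [hDx n])
  · rw [(hasSum_digits y₁ (ico _ hy₁)).tsum_eq.symm, (hasSum_digits y₂ (ico _ hy₂)).tsum_eq.symm]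
    exact tsum_congr (fun n => by rw [hDy n])
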